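/- Let (g,B,S) be a quadratic Rota–Baxter Lie algebra of weight λ over a field of characteristic ≠ 2 and let τ : g → g be an involutive Lie algebra automorphism (τ∘τ = id), with eigenspaces ℌ := ker(τ − id) and 𝔭 := ker(τ + id). Then: (τ−id)∘(B+λ·id)∘(τ+id) = 0 holds if and only if B(ℌ) ⊆ ℌ; and S(τx,y) + S(x,τy) = 0 for all x,y holds if and only if S vanishes identically on ℌ×ℌ and on 𝔭×𝔭. Consequently, τ is a reflection on (g,B,S) if and only if B(ℌ) ⊆ ℌ and both ℌ and 𝔭 are isotropic for S. -/
import Mathlib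


/-- Let `(g,B,S)` be a quadratic Rota–Baxter Lie algebra of weight `lam`
over a field of characteristic ≠ 2, and `τ` an involutive Lie algebra automorphism with
`ℌ = ker(τ − id)` and `𝔭 = ker(τ + id)`. Then `(τ−id)∘(B+lam·id)∘(τ+id) = 0` iff
`B(ℌ) ⊆ ℌ`; `S(τx,y)+S(x,τy) = 0` for all `x,y` iff `S` vanishes on `ℌ×ℌ` and `𝔭×𝔭`;
consequently `τ` is a reflection iff `B(ℌ) ⊆ ℌ` and both `ℌ` and `𝔭` are isotropic. -/
theorem stmt4 (K g : Type*) [Field K] [LieRing g] [LieAlgebra K g]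
    (htwo : (2 : K) ≠ 0)
    (lam : K) (B : g →ₗ[K] g) (S : g →ₗ[K] g →ₗ[K] K)
    (hB : ∀ x y : g, ⁅B x, B y⁆ = B (⁅B x, y⁆ + ⁅x, B y⁆ + lam • ⁅x, y⁆))
    (hSsymm : ∀ x y : g, S x y = S y x)
    (hSnondeg : ∀ x : g, (∀ y : g, S x y = 0) → x = 0)
    (hSinv : ∀ x y z : g, S ⁅x, y⁆ z + S y ⁅x, z⁆ = 0)
    (hSB : ∀ x y : g, S x (B y) + S (B x) y + lam * S x y = 0)
    (τ : g ≃ₗ[K] g)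
    (hτbr : ∀ x y : g, τ ⁅x, y⁆ = ⁅τ x, τ y⁆)
    (hτinv : ∀ x : g, τ (τ x) = x) :
    -- first equivalence
    ((∀ x : g, τ (B (τ x + x) + lam • (τ x + x)) = B (τ x + x) + lam • (τ x + x)) ↔
      (∀ x : g, τ x = x → τ (B x) = B x)) ∧
    -- second equivalence
    ((∀ x y : g, S (τ x) y + S x (τ y) = 0) ↔
      ((∀ x y : g, τ x = x → τ y = y → S x y = 0) ∧
       (∀ x y : g, τ x = -x → τ y = -y → S x y = 0))) ∧
    -- consequently: `τ` is a reflection iff `B(ℌ) ⊆ ℌ` and `ℌ`, `𝔭` are isotropic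
    (((∀ x : g, τ (B (τ x + x) + lam • (τ x + x)) = B (τ x + x) + lam • (τ x + x)) ∧
      (∀ x y : g, S (τ x) y + S x (τ y) = 0)) ↔
      ((∀ x : g, τ x = x → τ (B x) = B x) ∧
       (∀ x y : g, τ x = x → τ y = y → S x y = 0) ∧
       (∀ x y : g, τ x = -x → τ y = -y → S x y = 0))) := by

  have h1 : (∀ x : g, τ (B (τ x + x) + lam • (τ x + x)) = B (τ x + x) + lam • (τ x + x)) ↔
      (∀ x : g, τ x = x → τ (B x) = B x) := by
    constructor
    · intro H x hx
      have this := H x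
      rw [hx, show x + x = (2:K) • x from (two_smul K x).symm] at this
      rw [map_smul, smul_comm lam (2:K), ← smul_add, map_smul] at this
      have h := smul_right_injective g htwo this
      rw [map_add, map_smul, hx] at h
      exact add_right_cancel h
    · intro H x
      have hw : τ (τ x + x) = τ x + x := by
        rw [map_add, hτinv]; abel
      rw [map_add, map_smul, hw, H _ hw]
  have h2 : (∀ x y : g, S (τ x) y + S x (τ y) = 0) ↔
      ((∀ x y : g, τ x = x → τ y = y → S x y = 0) ∧
       (∀ x y : g, τ x = -x → τ y = -y → S x y = 0)) := by
    constructor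
    · intro H
      constructor
      · intro x y hx hy
        have := H x y
        rw [hx, hy] at this
        have h2s : (2:K) * S x y = 0 := by rw [two_mul]; exact this
        exact (mul_eq_zero.mp h2s).resolve_left htwo
      · intro x y hx hy
        have := H x y
        rw [hx, hy] at this
        simp only [map_neg, LinearMap.neg_apply] at this
        have h2s : (2:K) * S x y = 0 := by linear_combination -this
        exact (mul_eq_zero.mp h2s).resolve_left htwo
    · rintro ⟨hfix, hneg⟩ x y
      have ha : τ (x + τ x) = x + τ x := by rw [map_add, hτinv]; abel
      have hb : τ (x - τ x) = -(x - τ x) := by rw [map_sub, hτinv]; abel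
      have hc : τ (y + τ y) = y + τ y := by rw [map_add, hτinv]; abel
      have hd : τ (y - τ y) = -(y - τ y) := by rw [map_sub, hτinv]; abel
      have e1 := hfix _ _ ha hc
      have e2 := hneg _ _ hb hd
      simp only [map_add, map_sub, LinearMap.add_apply, LinearMap.sub_apply] at e1 e2
      have key : (2:K) * (S (τ x) y + S x (τ y)) = 0 := by linear_combination e1 - e2
      exact (mul_eq_zero.mp key).resolve_left htwo
  refine ⟨h1, h2, ?_⟩
  rw [h1, h2]
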